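/- Fix a real p > 1 and a list of positive integers s₁ < s₂ < … < s_n with total sum 2s. Construct 2n jobs: for each i, jobs A_i and B_i, both of processing time s_i; and two agents with preferred schedules σ_a = (A₁, B₁, A₂, B₂, …, A_n, B_n) and σ_b = (B₁, A₁, B₂, A₂, …, B_n, A_n). Then there exists a schedule σ of the 2n jobs with T(σ,σ_a)^p + T(σ,σ_b)^p ≤ 2·s^p if and only if the multiset {s₁,…,s_n} can be partitioned into two disjoint subsets each of sum s. -/
import Mathlib


/-- Completion time of job `i` in a schedule `τ : J ≃ Fin N` (a bijection from
jobs to positions), with processing times `p`. -/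
def completionTime {J : Type*} [Fintype J] {N : ℕ} (p : J → ℕ) (τ : J ≃ Fin N)
    (i : J) : ℕ :=
  ∑ j ∈ Finset.univ.filter (fun j => τ j ≤ τ i), p j

/-- Tardiness cost: `∑ i, max (0, C_i(τ) - C_i(σ))`. -/
def tardiness {J : Type*} [Fintype J] {N : ℕ} (p : J → ℕ) (τ σ : J ≃ Fin N) : ℕ :=
  ∑ i : J, (completionTime p τ i - completionTime p σ i)

/-- Sum of `s j` over `j < k`. -/
def SL {n : ℕ} (s : Fin n → ℕ) (k : ℕ) : ℕ := ∑ j : Fin n, if (j : ℕ) < k then s j else 0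

lemma SL_succ {n : ℕ} (s : Fin n → ℕ) (i : Fin n) : SL s ((i:ℕ)+1) = SL s (i:ℕ) + s i := by
  unfold SL
  have : ∀ j : Fin n, (if (j:ℕ) < (i:ℕ)+1 then s j else 0)
      = (if (j:ℕ) < (i:ℕ) then s j else 0) + (if j = i then s j else 0) := by
    intro j
    rcases eq_or_ne j i with rfl | hne
    · simp
    · have : (j:ℕ) ≠ (i:ℕ) := fun h => hne (Fin.ext h)
      simp only [if_neg hne]
      split_ifs <;> omega
  rw [Finset.sum_congr rfl (fun j _ => this j), Finset.sum_add_distrib,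
    Finset.sum_ite_eq' Finset.univ i, if_pos (Finset.mem_univ i)]

lemma strictMono_le_apply' {k : ℕ} {f : Fin k → ℕ} (hf : StrictMono f) (m : Fin k) :
    (m : ℕ) ≤ f m := by
  obtain ⟨t, ht⟩ := m
  induction t with
  | zero => exact Nat.zero_le _
  | succ t ih =>
    have h' : t < k := by omega
    have h1 := ih h'
    have h2 : f ⟨t, h'⟩ < f ⟨t+1, ht⟩ := hf (by simp [Fin.lt_def])
    simpa using Nat.lt_of_le_of_lt h1 h2

lemma SL_cast {n : ℕ} (s : Fin n → ℕ) (k : ℕ) (hk : k ≤ n) :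
    SL s k = ∑ m : Fin k, s (Fin.castLE hk m) := by
  rw [SL, ← Finset.sum_filter]
  rw [show ∑ m : Fin k, s (Fin.castLE hk m) = ∑ m ∈ Finset.univ.map (Fin.castLEEmb hk), s m
    from (Finset.sum_map Finset.univ (Fin.castLEEmb hk) s).symm]
  congr 1
  ext j
  simp only [Finset.mem_filter, Finset.mem_univ, true_and, Finset.mem_map]
  constructor
  · intro h
    exact ⟨⟨(j:ℕ), h⟩, by simp [Fin.castLEEmb, Fin.castLE]⟩
  · rintro ⟨m, rfl⟩
    simpa using m.isLt

/-- The sum of `s` over any set is at least the sum of the `card` smallest values. -/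
lemma sum_subset_ge_SL {n : ℕ} {s : Fin n → ℕ} (hmono : Monotone s) (T : Finset (Fin n)) :
    SL s T.card ≤ ∑ j ∈ T, s j := by
  have hcard : T.card ≤ n := by
    simpa using Finset.card_le_univ T
  rw [SL_cast s T.card hcard]
  have : ∑ j ∈ T, s j = ∑ m : Fin T.card, s ((T.orderIsoOfFin rfl) m : Fin n) := by
    rw [← Finset.sum_attach T (fun j => s j)]
    exact (Equiv.sum_comp (T.orderIsoOfFin rfl).toEquiv (fun x => s (x : Fin n))).symm
  rw [this]
  apply Finset.sum_le_sum
  intro m _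
  apply hmono
  have hsm : StrictMono (fun m : Fin T.card => (((T.orderIsoOfFin rfl) m : Fin n) : ℕ)) := by
    intro a b hab
    exact (T.orderIsoOfFin rfl).strictMono hab
  have := strictMono_le_apply' hsm m
  simp only [Fin.le_def, Fin.coe_castLE]
  exact this

lemma ct_expand {n : ℕ} (s : Fin n → ℕ) (τ : (Fin n ⊕ Fin n) ≃ Fin (2*n))
    (x : Fin n ⊕ Fin n) :
    completionTime (Sum.elim s s) τ x
      = ∑ j : Fin n, ((if (τ (Sum.inl j) : ℕ) ≤ (τ x : ℕ) then s j else 0)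
          + (if (τ (Sum.inr j) : ℕ) ≤ (τ x : ℕ) then s j else 0)) := by
  rw [completionTime, Finset.sum_filter, Fintype.sum_sum_type, ← Finset.sum_add_distrib]
  apply Finset.sum_congr rfl
  intro j _
  simp only [Fin.le_def, Sum.elim_inl, Sum.elim_inr]

/-- Completion times in an interleaved schedule: pair `i` occupies positions
`2i, 2i+1`, with `inl i` first iff `b i`. -/
lemma ct_interleave {n : ℕ} (s : Fin n → ℕ) (τ : (Fin n ⊕ Fin n) ≃ Fin (2*n))
    (b : Fin n → Prop) [DecidablePred b]
    (hτ : ∀ i : Fin n, (τ (Sum.inl i) : ℕ) = 2*(i:ℕ) + (if b i then 0 else 1)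
        ∧ (τ (Sum.inr i) : ℕ) = 2*(i:ℕ) + (if b i then 1 else 0)) (i : Fin n) :
    completionTime (Sum.elim s s) τ (Sum.inl i) = 2 * SL s i + (if b i then 1 else 2) * s i
    ∧ completionTime (Sum.elim s s) τ (Sum.inr i) = 2 * SL s i + (if b i then 2 else 1) * s i := by
  have key : ∀ (x : Fin n ⊕ Fin n) (c : ℕ),
      (∀ j : Fin n, ((if (τ (Sum.inl j) : ℕ) ≤ (τ x : ℕ) then s j else 0)
          + (if (τ (Sum.inr j) : ℕ) ≤ (τ x : ℕ) then s j else 0))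
        = ((if (j:ℕ) < (i:ℕ) then 2 * s j else 0) + (if j = i then c * s j else 0))) →
      completionTime (Sum.elim s s) τ x = 2 * SL s i + c * s i := by
    intro x c h
    rw [ct_expand, Finset.sum_congr rfl (fun j _ => h j), Finset.sum_add_distrib,
      Finset.sum_ite_eq' Finset.univ i, if_pos (Finset.mem_univ i), SL, Finset.mul_sum]
    congr 1
    apply Finset.sum_congr rfl
    intro j _
    split_ifs <;> ring
  constructor
  · apply key
    intro j
    have h1 := (hτ j).1; have h2 := (hτ j).2; have h3 := (hτ i).1
    rcases eq_or_ne j i with rfl | hne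
    · simp only [if_pos rfl, h1, h2, h3]
      split_ifs <;> omega
    · have hv : (j:ℕ) ≠ (i:ℕ) := fun h => hne (Fin.ext h)
      simp only [if_neg hne, h1, h2, h3]
      split_ifs <;> omega
  · apply key
    intro j
    have h1 := (hτ j).1; have h2 := (hτ j).2; have h3 := (hτ i).2
    rcases eq_or_ne j i with rfl | hne
    · simp only [if_pos rfl, h1, h2, h3]
      split_ifs <;> omega
    · have hv : (j:ℕ) ≠ (i:ℕ) := fun h => hne (Fin.ext h)
      simp only [if_neg hne, h1, h2, h3]
      split_ifs <;> omega

/-- Key lower bound: the tardiness of agent b is at least the total size of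
the pairs scheduled with `A_i` before `B_i`. -/
lemma crux {n : ℕ} (s : Fin n → ℕ) (hmono : Monotone s)
    (τ σb : (Fin n ⊕ Fin n) ≃ Fin (2*n))
    (hσb : ∀ i : Fin n, (σb (Sum.inr i) : ℕ) = 2 * (i : ℕ) ∧
      (σb (Sum.inl i) : ℕ) = 2 * (i : ℕ) + 1) :
    ∑ i ∈ Finset.univ.filter (fun i => τ (Sum.inl i) < τ (Sum.inr i)), s i
      ≤ tardiness (Sum.elim s s) τ σb := by
  classical
  set P := Sum.elim s s with hP
  set A : Fin n → Prop := fun i => τ (Sum.inl i) < τ (Sum.inr i) with hA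
  set L : Fin n → (Fin n ⊕ Fin n) := fun i => if A i then Sum.inr i else Sum.inl i with hL
  set e : Fin n → Fin (2*n) := fun i => τ (L i) with he
  have f1 : ∀ i, τ (Sum.inl i) ≤ e i ∧ τ (Sum.inr i) ≤ e i := by
    intro i
    by_cases h : A i
    · simp only [he, hL, if_pos h]
      exact ⟨le_of_lt h, le_refl _⟩
    · simp only [he, hL, if_neg h]
      exact ⟨le_refl _, le_of_not_gt h⟩
  have Linj : Function.Injective L := by
    intro i i' h
    simp only [hL] at h
    split_ifs at h <;> simp_all
  have f2 : Function.Injective e := fun i i' h => Linj (τ.injective h)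
  set R : Fin n → Finset (Fin n) := fun i => Finset.univ.filter (fun j => e j ≤ e i) with hR
  set c : Fin n → ℕ := fun i => completionTime P τ (L i) with hc
  set d : Fin n → ℕ := fun i => completionTime P σb (L i) with hd
  have step1 : ∀ i, 2 * ∑ j ∈ R i, s j ≤ c i := by
    intro i
    have hsub : (R i).image Sum.inl ∪ (R i).image Sum.inr
        ⊆ Finset.univ.filter (fun x => τ x ≤ τ (L i)) := by
      intro x hx
      simp only [Finset.mem_union, Finset.mem_image, hR, Finset.mem_filter,
        Finset.mem_univ, true_and] at hx ⊢
      rcases hx with ⟨j, hj, rfl⟩ | ⟨j, hj, rfl⟩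
      · exact le_trans (f1 j).1 hj
      · exact le_trans (f1 j).2 hj
    have hdisj : Disjoint ((R i).image Sum.inl) ((R i).image Sum.inr) := by
      rw [Finset.disjoint_left]
      rintro x hx hy
      simp only [Finset.mem_image] at hx hy
      obtain ⟨j, _, rfl⟩ := hx
      obtain ⟨j', _, h⟩ := hy
      simp at h
    have hval : ∑ x ∈ (R i).image Sum.inl ∪ (R i).image Sum.inr, P x
        = 2 * ∑ j ∈ R i, s j := by
      rw [Finset.sum_union hdisj, Finset.sum_image (fun a _ b _ h => Sum.inl_injective h),
        Finset.sum_image (fun a _ b _ h => Sum.inr_injective h)]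
      simp only [hP, Sum.elim_inl, Sum.elim_inr]
      ring
    rw [← hval, hc]
    exact Finset.sum_le_sum_of_subset hsub
  have hbspec : ∀ i : Fin n, (σb (Sum.inl i) : ℕ) = 2*(i:ℕ) + (if (False : Prop) then 0 else 1)
        ∧ (σb (Sum.inr i) : ℕ) = 2*(i:ℕ) + (if (False : Prop) then 1 else 0) := by
    intro i
    simp only [if_neg (not_false)]
    exact ⟨(hσb i).2, by simpa using (hσb i).1⟩
  have step2 : ∀ i, d i = 2 * SL s (i:ℕ) + (if A i then 1 else 2) * s i := by
    intro i
    have h := ct_interleave s σb (fun _ => (False : Prop)) hbspec i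
    by_cases hAi : A i
    · simp only [hd, hL, if_pos hAi]
      rw [h.2]
      simp
    · simp only [hd, hL, if_neg hAi]
      rw [h.1]
      simp
  have step3 : ∑ i, (c i - d i) ≤ tardiness P τ σb := by
    rw [tardiness]
    have : ∑ i, (c i - d i)
        = ∑ x ∈ Finset.univ.image L, (completionTime P τ x - completionTime P σb x) := by
      rw [Finset.sum_image (fun a _ b _ h => Linj h)]
    rw [this]
    exact Finset.sum_le_sum_of_subset (Finset.subset_univ _)
  set r : Fin n → ℕ := fun i => (R i).card with hr
  have rinj : Function.Injective r := by
    intro i i' h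
    have key : ∀ a b : Fin n, e a ≤ e b → r a = r b → a = b := by
      intro a b hab hcard
      have hsub : R a ⊆ R b := by
        intro j hj
        simp only [hR, Finset.mem_filter, Finset.mem_univ, true_and] at hj ⊢
        exact le_trans hj hab
      have heq : R a = R b := Finset.eq_of_subset_of_card_le hsub (le_of_eq hcard.symm)
      have : b ∈ R a := heq ▸ (by simp [hR])
      simp only [hR, Finset.mem_filter, Finset.mem_univ, true_and] at this
      exact f2 (le_antisymm hab this)
    rcases le_total (e i) (e i') with hle | hle
    · exact key i i' hle h
    · exact (key i' i hle h.symm).symm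
  have himage : Finset.univ.image r = Finset.Icc 1 n := by
    apply Finset.eq_of_subset_of_card_le
    · intro m hm
      simp only [Finset.mem_image, Finset.mem_univ, true_and] at hm
      obtain ⟨i, rfl⟩ := hm
      simp only [Finset.mem_Icc]
      constructor
      · apply Finset.card_pos.mpr
        exact ⟨i, by simp [hR]⟩
      · simpa using Finset.card_le_univ (R i)
    · rw [Finset.card_image_of_injective _ rinj, Nat.card_Icc]
      simp
  have hranksum : ∑ i, SL s (r i) = ∑ i : Fin n, (SL s (i:ℕ) + s i) := by
    rw [show (∑ i : Fin n, SL s (r i)) = ∑ m ∈ Finset.univ.image r, SL s m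
      from (Finset.sum_image (fun a _ b _ h => rinj h)).symm, himage]
    have h1 : Finset.Icc 1 n = Finset.Ico 1 (n+1) := by
      rw [Finset.Ico_add_one_right_eq_Icc]
    rw [h1, Finset.sum_Ico_eq_sum_range]
    simp only [Nat.add_sub_cancel]
    rw [← Fin.sum_univ_eq_sum_range (fun k => SL s (1 + k)) n]
    apply Finset.sum_congr rfl
    intro i _
    rw [Nat.add_comm 1 (i:ℕ), SL_succ]
  have h5 : 2 * ∑ i : Fin n, (SL s (i:ℕ) + s i) ≤ ∑ i, c i := by
    calc 2 * ∑ i : Fin n, (SL s (i:ℕ) + s i) = ∑ i, 2 * SL s (r i) := by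
          rw [← hranksum, Finset.mul_sum]
      _ ≤ ∑ i, c i := Finset.sum_le_sum (fun i _ =>
          le_trans (Nat.mul_le_mul_left 2 (sum_subset_ge_SL hmono (R i))) (step1 i))
  have h7 : ∑ i, d i + ∑ i ∈ Finset.univ.filter A, s i = 2 * ∑ i : Fin n, (SL s (i:ℕ) + s i) := by
    rw [Finset.sum_filter, ← Finset.sum_add_distrib, Finset.mul_sum]
    apply Finset.sum_congr rfl
    intro i _
    rw [step2 i]
    split_ifs <;> ring
  have h8 : ∑ i, c i ≤ ∑ i, (c i - d i) + ∑ i, d i := by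
    rw [← Finset.sum_add_distrib]
    exact Finset.sum_le_sum (fun i _ => by omega)
  have final : ∑ i ∈ Finset.univ.filter A, s i ≤ ∑ i : Fin n, (c i - d i) := by omega
  exact le_trans final step3

lemma ct_comm {n : ℕ} (s : Fin n → ℕ) (τ : (Fin n ⊕ Fin n) ≃ Fin (2*n))
    (x : Fin n ⊕ Fin n) :
    completionTime (Sum.elim s s) ((Equiv.sumComm (Fin n) (Fin n)).trans τ) x
      = completionTime (Sum.elim s s) τ ((Equiv.sumComm (Fin n) (Fin n)) x) := by
  rw [completionTime, completionTime, Finset.sum_filter, Finset.sum_filter]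
  apply Fintype.sum_equiv (Equiv.sumComm (Fin n) (Fin n))
  intro j
  cases j <;> simp

lemma tard_comm {n : ℕ} (s : Fin n → ℕ) (τ σ : (Fin n ⊕ Fin n) ≃ Fin (2*n)) :
    tardiness (Sum.elim s s) ((Equiv.sumComm (Fin n) (Fin n)).trans τ)
        ((Equiv.sumComm (Fin n) (Fin n)).trans σ)
      = tardiness (Sum.elim s s) τ σ := by
  rw [tardiness, tardiness]
  apply Fintype.sum_equiv (Equiv.sumComm (Fin n) (Fin n))
  intro x
  rw [ct_comm, ct_comm]

/-- Symmetric key lower bound for agent a. -/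
lemma crux_a {n : ℕ} (s : Fin n → ℕ) (hmono : Monotone s)
    (τ σa : (Fin n ⊕ Fin n) ≃ Fin (2*n))
    (hσa : ∀ i : Fin n, (σa (Sum.inl i) : ℕ) = 2 * (i : ℕ) ∧
      (σa (Sum.inr i) : ℕ) = 2 * (i : ℕ) + 1) :
    ∑ i ∈ Finset.univ.filter (fun i => τ (Sum.inr i) < τ (Sum.inl i)), s i
      ≤ tardiness (Sum.elim s s) τ σa := by
  have h := crux s hmono ((Equiv.sumComm (Fin n) (Fin n)).trans τ)
      ((Equiv.sumComm (Fin n) (Fin n)).trans σa)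
      (fun i => ⟨by simpa using (hσa i).1, by simpa using (hσa i).2⟩)
  rw [tard_comm] at h
  simpa using h

/-- The schedule determined by a set `A`: pair `i` occupies positions `2i, 2i+1`,
with `A_i` first iff `i ∈ A`. -/
def schedF {n : ℕ} (A : Finset (Fin n)) : Fin n ⊕ Fin n → Fin (2*n) :=
  Sum.elim (fun i => ⟨2*(i:ℕ) + (if i ∈ A then 0 else 1), by have := i.isLt; split_ifs <;> omega⟩)
    (fun i => ⟨2*(i:ℕ) + (if i ∈ A then 1 else 0), by have := i.isLt; split_ifs <;> omega⟩)

lemma schedF_inj {n : ℕ} (A : Finset (Fin n)) : Function.Injective (schedF A) := by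
  intro x y h
  have trich : ∀ (i j : Fin n), (i:ℕ) = (j:ℕ) ∨ ((i:ℕ) < j ∨ (j:ℕ) < i) := by
    intro i j; omega
  rcases x with i | i <;> rcases y with j | j <;>
    simp only [schedF, Sum.elim_inl, Sum.elim_inr, Fin.mk.injEq] at h
  · exact congrArg Sum.inl (Fin.ext (by split_ifs at h <;> omega))
  · exfalso
    rcases trich i j with heq | hlt
    · have : i = j := Fin.ext heq
      subst this
      split_ifs at h <;> omega
    · split_ifs at h <;> omega
  · exfalso
    rcases trich i j with heq | hlt
    · have : i = j := Fin.ext heq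
      subst this
      split_ifs at h <;> omega
    · split_ifs at h <;> omega
  · exact congrArg Sum.inr (Fin.ext (by split_ifs at h <;> omega))

noncomputable def schedEquiv {n : ℕ} (A : Finset (Fin n)) : (Fin n ⊕ Fin n) ≃ Fin (2*n) :=
  Equiv.ofBijective (schedF A)
    ((Fintype.bijective_iff_injective_and_card _).2
      ⟨schedF_inj A, by simp [Fintype.card_sum]; omega⟩)

lemma schedEquiv_spec {n : ℕ} (A : Finset (Fin n)) (i : Fin n) :
    ((schedEquiv A) (Sum.inl i) : ℕ) = 2*(i:ℕ) + (if i ∈ A then 0 else 1)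
    ∧ ((schedEquiv A) (Sum.inr i) : ℕ) = 2*(i:ℕ) + (if i ∈ A then 1 else 0) := by
  constructor <;> simp [schedEquiv, schedF]

theorem lp_tardiness_partition_reduction (p : ℝ) (hp : 1 < p) (n : ℕ)
    (s : Fin n → ℕ) (hmono : StrictMono s) (hpos : ∀ i, 0 < s i)
    (sval : ℕ) (hsum : ∑ i : Fin n, s i = 2 * sval)
    (σa σb : (Fin n ⊕ Fin n) ≃ Fin (2 * n))
    (hσa : ∀ i : Fin n, (σa (Sum.inl i) : ℕ) = 2 * (i : ℕ) ∧
      (σa (Sum.inr i) : ℕ) = 2 * (i : ℕ) + 1)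
    (hσb : ∀ i : Fin n, (σb (Sum.inr i) : ℕ) = 2 * (i : ℕ) ∧
      (σb (Sum.inl i) : ℕ) = 2 * (i : ℕ) + 1) :
    (∃ σ : (Fin n ⊕ Fin n) ≃ Fin (2 * n),
        ((tardiness (Sum.elim s s) σ σa : ℝ) ^ p
          + (tardiness (Sum.elim s s) σ σb : ℝ) ^ p ≤ 2 * (sval : ℝ) ^ p))
      ↔ (∃ A : Finset (Fin n), ∑ i ∈ A, s i = sval ∧ ∑ i ∈ Aᶜ, s i = sval) := by
  classical
  constructor
  · rintro ⟨τ, hτle⟩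
    set Tb := tardiness (Sum.elim s s) τ σb with hTbdef
    set Ta := tardiness (Sum.elim s s) τ σa with hTadef
    set A : Finset (Fin n) := Finset.univ.filter (fun i => τ (Sum.inl i) < τ (Sum.inr i))
      with hAdef
    have hb : ∑ i ∈ A, s i ≤ Tb := crux s hmono.monotone τ σb hσb
    have hcomp : Aᶜ = Finset.univ.filter (fun i => τ (Sum.inr i) < τ (Sum.inl i)) := by
      ext i
      have hne : (τ (Sum.inl i) : ℕ) ≠ (τ (Sum.inr i) : ℕ) := by
        intro h
        exact Sum.inl_ne_inr (τ.injective (Fin.ext h))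
      simp only [Finset.mem_compl, hAdef, Finset.mem_filter, Finset.mem_univ, true_and,
        Fin.lt_def]
      omega
    have ha : ∑ i ∈ Aᶜ, s i ≤ Ta := by
      rw [hcomp]
      exact crux_a s hmono.monotone τ σa hσa
    have htot : ∑ i ∈ A, s i + ∑ i ∈ Aᶜ, s i = 2 * sval := by
      rw [Finset.sum_add_sum_compl]
      exact hsum
    set u := ∑ i ∈ A, s i with hu
    set v := ∑ i ∈ Aᶜ, s i with hv
    have hueq : u = sval := by
      have hp0 : (0:ℝ) ≤ p := by linarith
      have h1 : ((u:ℝ))^p ≤ (Tb:ℝ)^p :=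
        Real.rpow_le_rpow (by positivity) (by exact_mod_cast hb) hp0
      have h2 : ((v:ℝ))^p ≤ (Ta:ℝ)^p :=
        Real.rpow_le_rpow (by positivity) (by exact_mod_cast ha) hp0
      have h3 : (u:ℝ)^p + (v:ℝ)^p ≤ 2*(sval:ℝ)^p := by linarith
      by_contra hne'
      have huvne : u ≠ v := by omega
      have hmid : ((sval:ℝ)) = (1/2)*(u:ℝ) + (1/2)*(v:ℝ) := by
        have : (u:ℝ) + v = 2*sval := by exact_mod_cast htot
        linarith
      have hconv := (strictConvexOn_rpow hp).2 (Set.mem_Ici.mpr (by positivity : (0:ℝ) ≤ (u:ℝ)))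
          (Set.mem_Ici.mpr (by positivity : (0:ℝ) ≤ (v:ℝ)))
          (by exact_mod_cast huvne) (by norm_num : (0:ℝ) < 1/2) (by norm_num : (0:ℝ) < 1/2)
          (by norm_num)
      simp only [smul_eq_mul] at hconv
      rw [← hmid] at hconv
      linarith
    exact ⟨A, hueq, by omega⟩
  · rintro ⟨A, hA1, hA2⟩
    refine ⟨schedEquiv A, ?_⟩
    set σ := schedEquiv A with hσdef
    have hσct := fun i => ct_interleave s σ (fun i => i ∈ A) (schedEquiv_spec A) i
    have haspec : ∀ i : Fin n, (σa (Sum.inl i) : ℕ) = 2*(i:ℕ) + (if (True:Prop) then 0 else 1)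
        ∧ (σa (Sum.inr i) : ℕ) = 2*(i:ℕ) + (if (True:Prop) then 1 else 0) := by
      intro i
      simpa using hσa i
    have hact := fun i => ct_interleave s σa (fun _ => (True : Prop)) haspec i
    have hbspec : ∀ i : Fin n, (σb (Sum.inl i) : ℕ) = 2*(i:ℕ) + (if (False:Prop) then 0 else 1)
        ∧ (σb (Sum.inr i) : ℕ) = 2*(i:ℕ) + (if (False:Prop) then 1 else 0) := by
      intro i
      simp only [if_neg (not_false)]
      exact ⟨(hσb i).2, by simpa using (hσb i).1⟩
    have hbct := fun i => ct_interleave s σb (fun _ => (False : Prop)) hbspec i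
    have hfc : Finset.univ.filter (fun i => i ∉ A) = Aᶜ := by
      ext i
      simp
    have hpta : ∀ i : Fin n,
        (completionTime (Sum.elim s s) σ (Sum.inl i)
            - completionTime (Sum.elim s s) σa (Sum.inl i))
          + (completionTime (Sum.elim s s) σ (Sum.inr i)
            - completionTime (Sum.elim s s) σa (Sum.inr i))
        = if i ∈ A then 0 else s i := by
      intro i
      rw [(hσct i).1, (hσct i).2, (hact i).1, (hact i).2]
      simp only [if_true]
      split_ifs <;> omega
    have hptb : ∀ i : Fin n,
        (completionTime (Sum.elim s s) σ (Sum.inl i)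
            - completionTime (Sum.elim s s) σb (Sum.inl i))
          + (completionTime (Sum.elim s s) σ (Sum.inr i)
            - completionTime (Sum.elim s s) σb (Sum.inr i))
        = if i ∈ A then s i else 0 := by
      intro i
      rw [(hσct i).1, (hσct i).2, (hbct i).1, (hbct i).2]
      simp only [if_false]
      split_ifs <;> omega
    have hTa : tardiness (Sum.elim s s) σ σa = ∑ i ∈ Aᶜ, s i := by
      rw [tardiness, Fintype.sum_sum_type, ← Finset.sum_add_distrib,
        Finset.sum_congr rfl (fun i _ => hpta i)]
      rw [show (∑ i : Fin n, if i ∈ A then 0 else s i)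
          = ∑ i : Fin n, if i ∈ Aᶜ then s i else 0
        from Finset.sum_congr rfl (fun i _ => by by_cases h : i ∈ A <;> simp [h])]
      rw [Finset.sum_ite_mem, Finset.univ_inter]
    have hTb : tardiness (Sum.elim s s) σ σb = ∑ i ∈ A, s i := by
      rw [tardiness, Fintype.sum_sum_type, ← Finset.sum_add_distrib,
        Finset.sum_congr rfl (fun i _ => hptb i)]
      rw [show (∑ i : Fin n, if i ∈ A then s i else 0)
          = ∑ i ∈ Finset.univ ∩ A, s i from Finset.sum_ite_mem _ _ _, Finset.univ_inter]
    rw [hTa, hTb, hA1, hA2]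
    exact le_of_eq (by ring)
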